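/- Let ν > 0, λ > 0, and let u, f : ℝ² → ℝ² and p : ℝ² → ℝ be smooth and 2π-periodic with div u = 0, div f = 0, −Δf = λf, and suppose u is a steady solution of the forced Navier–Stokes equations: −νΔu + (u·∇)u + ∇p = f. Then ∫_Q |Δu|² dx = λ ∫_Q |∇u|² dx, where Q = [0,2π]² is the period cell. -/

import Mathlib

open MeasureTheory Filter Topology Real Set
open scoped RealInnerProductSpace
noncomputable section

/-- The plane, with its Euclidean structure. -/
abbrev E2 : Type := EuclideanSpace ℝ (Fin 2)

/-- Partial derivative `∂ᵢ g` at `x`. -/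
def pd (i : Fin 2) (g : E2 → ℝ) (x : E2) : ℝ := fderiv ℝ g x (EuclideanSpace.single i 1)

/-- Laplacian `Δ g` at `x`. -/
def lap (g : E2 → ℝ) (x : E2) : ℝ := ∑ i : Fin 2, pd i (pd i g) x

/-- Perpendicular gradient `∇^⊥ψ = (−∂₂ψ, ∂₁ψ)`. -/
def gradPerp (ψ : E2 → ℝ) (x : E2) : Fin 2 → ℝ := ![-(pd 1 ψ x), pd 0 ψ x]

/-- The period cell `Q = [0,2π]²`. -/
def Q2 : Set E2 := {x : E2 | x 0 ∈ Set.Icc 0 (2 * π) ∧ x 1 ∈ Set.Icc 0 (2 * π)}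

/-- A function on `ℝ²` is `2π`-periodic if it is invariant under translation by
`2π eᵢ`, `i = 1,2`. -/
def Per2 {α : Type*} (v : E2 → α) : Prop :=
  ∀ (x : E2) (i : Fin 2), v (x + (2 * π) • EuclideanSpace.single i 1) = v x
lemma pd_contDiff {g : E2 → ℝ} (hg : ContDiff ℝ (⊤ : ℕ∞) g) (i : Fin 2) :
    ContDiff ℝ (⊤ : ℕ∞) (pd i g) :=
  ((hg.fderiv_right (by exact_mod_cast le_top)).clm_apply contDiff_const)

lemma pd_cont {g : E2 → ℝ} (hg : ContDiff ℝ (⊤ : ℕ∞) g) (i : Fin 2) :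
    Continuous (pd i g) := (pd_contDiff hg i).continuous

lemma pd_per {g : E2 → ℝ} (hg : ContDiff ℝ (⊤ : ℕ∞) g) (hper : Per2 g) (i : Fin 2) :
    Per2 (pd i g) := by
  intro x j
  have h1 : (g ∘ fun y : E2 => y + (2*π) • EuclideanSpace.single j 1) = g := by
    funext y; exact hper y j
  have h2 : HasFDerivAt (fun y : E2 => y + (2*π) • EuclideanSpace.single j 1)
      (ContinuousLinearMap.id ℝ E2) x := (hasFDerivAt_id x).add_const _
  have h3 : HasFDerivAt g (fderiv ℝ g (x + (2*π) • EuclideanSpace.single j 1))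
      (x + (2*π) • EuclideanSpace.single j 1) :=
    (hg.differentiable (by simp) _).hasFDerivAt
  have h4 := h3.comp x h2
  rw [h1] at h4
  simp only [pd, h4.fderiv]
  simp

lemma isClosed_Q2 : IsClosed Q2 := by
  have h0 : Continuous fun x : E2 => x 0 := (EuclideanSpace.proj (0 : Fin 2)).continuous
  have h1 : Continuous fun x : E2 => x 1 := (EuclideanSpace.proj (1 : Fin 2)).continuous
  exact (isClosed_Icc.preimage h0).inter (isClosed_Icc.preimage h1)

lemma isCompact_Q2 : IsCompact Q2 := by
  refine Metric.isCompact_of_isClosed_isBounded isClosed_Q2 ?_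
  refine isBounded_iff_forall_norm_le.2 ⟨4 * π, fun x hx => ?_⟩
  obtain ⟨⟨h00, h01⟩, h10, h11⟩ := hx
  have hn : ‖x‖ = Real.sqrt (∑ i : Fin 2, x i ^ 2) := by
    rw [EuclideanSpace.norm_eq]; congr 1; congr 1; ext i; rw [Real.norm_eq_abs, sq_abs]
  rw [hn, Fin.sum_univ_two]
  have hπ : 0 < π := Real.pi_pos
  have : x 0 ^ 2 + x 1 ^ 2 ≤ (4 * π) ^ 2 := by nlinarith
  calc Real.sqrt (x 0 ^ 2 + x 1 ^ 2) ≤ Real.sqrt ((4 * π) ^ 2) := Real.sqrt_le_sqrt this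
    _ = 4 * π := by rw [Real.sqrt_sq (by positivity)]

lemma measurableSet_Q2 : MeasurableSet Q2 :=
  isClosed_Q2.measurableSet

lemma integrableOn_Q2 {F : E2 → ℝ} (hF : Continuous F) : IntegrableOn F Q2 :=
  hF.continuousOn.integrableOn_compact isCompact_Q2


def mk2 (a b : ℝ) : E2 := a • EuclideanSpace.single (0 : Fin 2) 1 + b • EuclideanSpace.single (1 : Fin 2) 1

lemma mk2_eq (a b : ℝ) : (@WithLp.toLp 2 (Fin 2 → ℝ)) ![a, b] = mk2 a b := by
  ext i
  fin_cases i <;> simp [mk2, EuclideanSpace.single_apply]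

lemma mk2_add_smul_fst (a b t : ℝ) :
    mk2 a b + t • EuclideanSpace.single (0 : Fin 2) 1 = mk2 (a + t) b := by
  simp only [mk2, add_smul]; abel

lemma mk2_add_smul_snd (a b t : ℝ) :
    mk2 a b + t • EuclideanSpace.single (1 : Fin 2) 1 = mk2 a (b + t) := by
  simp only [mk2, add_smul]; abel

lemma continuous_mk2 : Continuous fun z : ℝ × ℝ => mk2 z.1 z.2 := by
  unfold mk2
  exact (continuous_fst.smul continuous_const).add (continuous_snd.smul continuous_const)

lemma preimage_Q2 :
    (@WithLp.toLp 2 (Fin 2 → ℝ)) ⁻¹' Q2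
      = {y : Fin 2 → ℝ | y 0 ∈ Set.Icc 0 (2*π) ∧ y 1 ∈ Set.Icc 0 (2*π)} := by
  ext y
  exact Iff.rfl

lemma integral_Q2_transfer (F : E2 → ℝ) :
    ∫ x in Q2, F x
      = ∫ z in (Set.Icc 0 (2*π)) ×ˢ (Set.Icc 0 (2*π)), F (mk2 z.1 z.2) := by
  rw [← (PiLp.volume_preserving_toLp (Fin 2)).setIntegral_preimage_emb
    (MeasurableEquiv.toLp 2 (Fin 2 → ℝ)).measurableEmbedding F Q2, preimage_Q2]
  rw [← ((volume_preserving_finTwoArrow ℝ).symm).setIntegral_preimage_emb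
    (MeasurableEquiv.finTwoArrow).symm.measurableEmbedding _ _]
  have hs : (MeasurableEquiv.finTwoArrow (α := ℝ)).symm ⁻¹'
      {y : Fin 2 → ℝ | y 0 ∈ Set.Icc 0 (2*π) ∧ y 1 ∈ Set.Icc 0 (2*π)}
      = (Set.Icc 0 (2*π)) ×ˢ (Set.Icc 0 (2*π)) := by
    ext z
    simp [MeasurableEquiv.finTwoArrow, Set.mem_prod, Prod.le_def]; tauto
  have hfun : (fun z : ℝ × ℝ =>
      F ((@WithLp.toLp 2 (Fin 2 → ℝ)) ((MeasurableEquiv.finTwoArrow).symm z)))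
      = fun z : ℝ × ℝ => F (mk2 z.1 z.2) := by
    funext z
    have : (MeasurableEquiv.finTwoArrow (α := ℝ)).symm z = ![z.1, z.2] := by
      ext i; fin_cases i <;> rfl
    rw [this, mk2_eq]
  rw [hs]
  rw [show (fun z : ℝ × ℝ =>
      F ((@WithLp.toLp 2 (Fin 2 → ℝ)) ((MeasurableEquiv.finTwoArrow).symm z)))
      = fun z : ℝ × ℝ => F (mk2 z.1 z.2) from hfun]

lemma integrableOn_prod {F : E2 → ℝ} (hF : Continuous F) :
    IntegrableOn (fun z : ℝ × ℝ => F (mk2 z.1 z.2))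
      ((Set.Icc 0 (2*π)) ×ˢ (Set.Icc 0 (2*π))) :=
  (hF.comp continuous_mk2).continuousOn.integrableOn_compact (isCompact_Icc.prod isCompact_Icc)

lemma integral_Q2_iter_fst (F : E2 → ℝ) (hF : Continuous F) :
    ∫ x in Q2, F x
      = ∫ b in Set.Icc 0 (2*π), ∫ a in Set.Icc 0 (2*π), F (mk2 a b) := by
  rw [integral_Q2_transfer]
  have h := integrableOn_prod hF
  simp only [IntegrableOn] at h
  rw [Measure.volume_eq_prod, ← Measure.prod_restrict] at h
  rw [Measure.volume_eq_prod, ← Measure.prod_restrict]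
  exact integral_prod_symm _ h

lemma integral_Q2_iter_snd (F : E2 → ℝ) (hF : Continuous F) :
    ∫ x in Q2, F x
      = ∫ a in Set.Icc 0 (2*π), ∫ b in Set.Icc 0 (2*π), F (mk2 a b) := by
  rw [integral_Q2_transfer]
  have h := integrableOn_prod hF
  simp only [IntegrableOn] at h
  rw [Measure.volume_eq_prod, ← Measure.prod_restrict] at h
  rw [Measure.volume_eq_prod, ← Measure.prod_restrict]
  exact integral_prod _ h

lemma hasDerivAt_line (g : E2 → ℝ) (hg : ContDiff ℝ (⊤ : ℕ∞) g) (c : E2) (v : E2) (t : ℝ) :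
    HasDerivAt (fun s : ℝ => g (c + s • v)) (fderiv ℝ g (c + t • v) v) t := by
  have hline : HasDerivAt (fun s : ℝ => c + s • v) v t := by
    simpa using ((hasDerivAt_id t).smul_const v).const_add c
  have hgd : HasFDerivAt g (fderiv ℝ g (c + t • v)) (c + t • v) :=
    (hg.differentiable (by simp) _).hasFDerivAt
  exact hgd.comp_hasDerivAt t hline

lemma integral_pd_zero {g : E2 → ℝ} (hg : ContDiff ℝ (⊤ : ℕ∞) g) (hper : Per2 g) (i : Fin 2) :
    ∫ x in Q2, pd i g x = 0 := by
  have h2π : (0:ℝ) ≤ 2 * π := by positivity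
  fin_cases i <;> simp only [Fin.zero_eta, Fin.mk_one, Fin.isValue]
  · rw [integral_Q2_iter_fst _ (pd_cont hg 0)]
    have hinner : ∀ b : ℝ, ∫ a in Set.Icc 0 (2*π), pd 0 g (mk2 a b) = 0 := by
      intro b
      have hd : ∀ t ∈ Set.uIcc (0:ℝ) (2*π),
          HasDerivAt (fun s : ℝ => g (mk2 s b)) (pd 0 g (mk2 t b)) t := by
        intro t _
        have := hasDerivAt_line g hg (mk2 0 b) (EuclideanSpace.single 0 1) t
        simp only [mk2_add_smul_fst, zero_add] at this
        exact this
      have hci : IntervalIntegrable (fun t => pd 0 g (mk2 t b)) volume 0 (2*π) := by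
        apply Continuous.intervalIntegrable
        exact (pd_cont hg 0).comp (continuous_mk2.comp (continuous_id.prodMk continuous_const))
      rw [MeasureTheory.integral_Icc_eq_integral_Ioc,
        ← intervalIntegral.integral_of_le h2π,
        intervalIntegral.integral_eq_sub_of_hasDerivAt hd hci]
      have := hper (mk2 0 b) 0
      rw [mk2_add_smul_fst, zero_add] at this
      rw [this, sub_self]
    simp only [hinner, integral_zero]
  · rw [integral_Q2_iter_snd _ (pd_cont hg 1)]
    have hinner : ∀ a : ℝ, ∫ b in Set.Icc 0 (2*π), pd 1 g (mk2 a b) = 0 := by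
      intro a
      have hd : ∀ t ∈ Set.uIcc (0:ℝ) (2*π),
          HasDerivAt (fun s : ℝ => g (mk2 a s)) (pd 1 g (mk2 a t)) t := by
        intro t _
        have := hasDerivAt_line g hg (mk2 a 0) (EuclideanSpace.single 1 1) t
        simp only [mk2_add_smul_snd, zero_add] at this
        exact this
      have hci : IntervalIntegrable (fun t => pd 1 g (mk2 a t)) volume 0 (2*π) := by
        apply Continuous.intervalIntegrable
        exact (pd_cont hg 1).comp (continuous_mk2.comp (continuous_const.prodMk continuous_id))
      rw [MeasureTheory.integral_Icc_eq_integral_Ioc,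
        ← intervalIntegral.integral_of_le h2π,
        intervalIntegral.integral_eq_sub_of_hasDerivAt hd hci]
      have := hper (mk2 a 0) 1
      rw [mk2_add_smul_snd, zero_add] at this
      rw [this, sub_self]
    simp only [hinner, integral_zero]

lemma pd_eval {g : E2 → ℝ} (hg : ContDiff ℝ (⊤ : ℕ∞) g) (i j : Fin 2) (x : E2) :
    pd i (pd j g) x = fderiv ℝ (fderiv ℝ g) x (EuclideanSpace.single i 1)
      (EuclideanSpace.single j 1) := by
  have hc : DifferentiableAt ℝ (fderiv ℝ g) x := by
    have h1 : ContDiff ℝ (⊤ : ℕ∞) (fderiv ℝ g) := hg.fderiv_right (by exact_mod_cast le_top)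
    exact (h1.differentiable (by simp)) x
  have : pd j g = fun y => (fderiv ℝ g y) ((fun _ : E2 => EuclideanSpace.single j (1:ℝ)) y) := rfl
  rw [pd, this, fderiv_clm_apply hc (differentiableAt_const _)]
  simp

lemma pd_comm {g : E2 → ℝ} (hg : ContDiff ℝ (⊤ : ℕ∞) g) (i j : Fin 2) (x : E2) :
    pd i (pd j g) x = pd j (pd i g) x := by
  rw [pd_eval hg, pd_eval hg]
  exact (hg.contDiffAt.isSymmSndFDerivAt (by rw [minSmoothness_of_isRCLikeNormedField]; exact WithTop.coe_le_coe.mpr (le_top : (2 : ℕ∞) ≤ ⊤))).eq _ _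

lemma pd_mul {g h : E2 → ℝ} (hg : ContDiff ℝ (⊤ : ℕ∞) g) (hh : ContDiff ℝ (⊤ : ℕ∞) h)
    (i : Fin 2) (x : E2) :
    pd i (fun y => g y * h y) x = pd i g x * h x + g x * pd i h x := by
  have hgd : DifferentiableAt ℝ g x := (hg.differentiable (by simp)) x
  have hhd : DifferentiableAt ℝ h x := (hh.differentiable (by simp)) x
  rw [pd, fderiv_fun_mul hgd hhd]
  simp [pd]
  ring

lemma pd_add {g h : E2 → ℝ} (hg : ContDiff ℝ (⊤ : ℕ∞) g) (hh : ContDiff ℝ (⊤ : ℕ∞) h)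
    (i : Fin 2) (x : E2) :
    pd i (fun y => g y + h y) x = pd i g x + pd i h x := by
  have hgd : DifferentiableAt ℝ g x := (hg.differentiable (by simp)) x
  have hhd : DifferentiableAt ℝ h x := (hh.differentiable (by simp)) x
  rw [pd, fderiv_fun_add hgd hhd]
  simp [pd]

lemma pd_zero_fun (i : Fin 2) (x : E2) : pd i (fun _ => (0:ℝ)) x = 0 := by
  simp [pd]

lemma ibp {g h : E2 → ℝ} (hg : ContDiff ℝ (⊤ : ℕ∞) g) (hh : ContDiff ℝ (⊤ : ℕ∞) h)
    (hgp : Per2 g) (hhp : Per2 h) (i : Fin 2) :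
    ∫ x in Q2, pd i g x * h x = - ∫ x in Q2, g x * pd i h x := by
  have hmul : ContDiff ℝ (⊤ : ℕ∞) (fun y => g y * h y) := hg.mul hh
  have hmulp : Per2 (fun y => g y * h y) := fun x j => by simp [hgp x j, hhp x j]
  have h0 := integral_pd_zero hmul hmulp i
  have : (fun x => pd i (fun y => g y * h y) x)
      = fun x => pd i g x * h x + g x * pd i h x := funext (pd_mul hg hh i)
  rw [this] at h0
  rw [integral_add ?_ ?_] at h0
  · linarith
  · exact integrableOn_Q2 (((pd_cont hg i).mul hh.continuous))
  · exact integrableOn_Q2 ((hg.continuous.mul (pd_cont hh i)))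

abbrev Sm (g : E2 → ℝ) : Prop := ContDiff ℝ (⊤ : ℕ∞) g

lemma Iadd {a b : E2 → ℝ} (ha : Continuous a) (hb : Continuous b) :
    ∫ x in Q2, (a x + b x) = (∫ x in Q2, a x) + ∫ x in Q2, b x :=
  integral_add (integrableOn_Q2 ha) (integrableOn_Q2 hb)

lemma Icongr {a b : E2 → ℝ} (h : ∀ x, a x = b x) :
    ∫ x in Q2, a x = ∫ x in Q2, b x := by rw [funext h]

lemma pd_sq {g : E2 → ℝ} (hg : Sm g) (i : Fin 2) (x : E2) :
    pd i (fun y => g y ^ 2) x = 2 * g x * pd i g x := by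
  have h := pd_mul hg hg i x
  have h2 : (fun y => g y ^ 2) = fun y => g y * g y := by funext y; ring
  rw [h2, h]; ring

lemma ibp2 {g h : E2 → ℝ} (hg : Sm g) (hh : Sm h) (hgp : Per2 g) (hhp : Per2 h) (i j : Fin 2) :
    ∫ x in Q2, pd i (pd j g) x * h x = ∫ x in Q2, g x * pd j (pd i h) x := by
  rw [ibp (pd_contDiff hg j) hh (pd_per hg hgp j) hhp i]
  rw [ibp hg (pd_contDiff hh i) hgp (pd_per hh hhp i) j]
  ring_nf

/-- transport lemma: `∫ Σⱼ wⱼ ∂ⱼ W = 0` when `div w = 0`. -/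
lemma transport {w0 w1 W : E2 → ℝ} (hw0 : Sm w0) (hw1 : Sm w1) (hW : Sm W)
    (hw0p : Per2 w0) (hw1p : Per2 w1) (hWp : Per2 W)
    (hdiv : ∀ x, pd 0 w0 x + pd 1 w1 x = 0) :
    ∫ x in Q2, (w0 x * pd 0 W x + w1 x * pd 1 W x) = 0 := by
  have h0 : ∫ x in Q2, w0 x * pd 0 W x = - ∫ x in Q2, W x * pd 0 w0 x := by
    rw [Icongr (fun x => mul_comm (w0 x) (pd 0 W x))]
    exact ibp hW hw0 hWp hw0p 0
  have h1 : ∫ x in Q2, w1 x * pd 1 W x = - ∫ x in Q2, W x * pd 1 w1 x := by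
    rw [Icongr (fun x => mul_comm (w1 x) (pd 1 W x))]
    exact ibp hW hw1 hWp hw1p 1
  have hcw0 : Continuous fun x => w0 x * pd 0 W x := hw0.continuous.mul (pd_cont hW 0)
  have hcw1 : Continuous fun x => w1 x * pd 1 W x := hw1.continuous.mul (pd_cont hW 1)
  rw [Iadd hcw0 hcw1, h0, h1]
  have hcW0 : Continuous fun x => W x * pd 0 w0 x := hW.continuous.mul (pd_cont hw0 0)
  have hcW1 : Continuous fun x => W x * pd 1 w1 x := hW.continuous.mul (pd_cont hw1 1)
  have : (∫ x in Q2, W x * pd 0 w0 x) + ∫ x in Q2, W x * pd 1 w1 x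
      = ∫ x in Q2, (W x * pd 0 w0 x + W x * pd 1 w1 x) := (Iadd hcW0 hcW1).symm
  have hz : ∫ x in Q2, (W x * pd 0 w0 x + W x * pd 1 w1 x) = 0 := by
    rw [Icongr (fun x => show W x * pd 0 w0 x + W x * pd 1 w1 x = 0 by
      linear_combination W x * hdiv x)]
    exact integral_zero _ _
  linarith

lemma lap_eq (g : E2 → ℝ) (x : E2) :
    lap g x = pd 0 (pd 0 g) x + pd 1 (pd 1 g) x := by
  simp [lap, Fin.sum_univ_two]

lemma lap_contDiff {g : E2 → ℝ} (hg : Sm g) : Sm (lap g) := by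
  have : lap g = fun x => pd 0 (pd 0 g) x + pd 1 (pd 1 g) x := funext (lap_eq g)
  rw [this]
  exact (pd_contDiff (pd_contDiff hg 0) 0).add (pd_contDiff (pd_contDiff hg 1) 1)

lemma lap_per {g : E2 → ℝ} (hg : Sm g) (hgp : Per2 g) : Per2 (lap g) := by
  intro x i
  rw [lap_eq, lap_eq,
    pd_per (pd_contDiff hg 0) (pd_per hg hgp 0) 0 x i,
    pd_per (pd_contDiff hg 1) (pd_per hg hgp 1) 1 x i]

lemma lap_pair {g φ : E2 → ℝ} (hg : Sm g) (hφ : Sm φ) (hgp : Per2 g) (hφp : Per2 φ) :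
    ∫ x in Q2, lap g x * φ x = ∫ x in Q2, g x * lap φ x := by
  have h1 : ∫ x in Q2, lap g x * φ x
      = (∫ x in Q2, pd 0 (pd 0 g) x * φ x) + ∫ x in Q2, pd 1 (pd 1 g) x * φ x := by
    rw [← Iadd ((pd_cont (pd_contDiff hg 0) 0).fun_mul hφ.continuous)
      ((pd_cont (pd_contDiff hg 1) 1).fun_mul hφ.continuous)]
    exact Icongr fun x => by rw [lap_eq]; ring
  rw [h1, ibp2 hg hφ hgp hφp 0 0, ibp2 hg hφ hgp hφp 1 1,
    ← Iadd (hg.continuous.fun_mul (pd_cont (pd_contDiff hφ 0) 0))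
      (hg.continuous.fun_mul (pd_cont (pd_contDiff hφ 1) 1))]
  exact Icongr fun x => by rw [lap_eq]; ring

lemma lap_energy {g : E2 → ℝ} (hg : Sm g) (hgp : Per2 g) :
    ∫ x in Q2, g x * lap g x = - ∫ x in Q2, (pd 0 g x ^ 2 + pd 1 g x ^ 2) := by
  have h1 : ∫ x in Q2, g x * lap g x
      = (∫ x in Q2, pd 0 (pd 0 g) x * g x) + ∫ x in Q2, pd 1 (pd 1 g) x * g x := by
    rw [← Iadd ((pd_cont (pd_contDiff hg 0) 0).fun_mul hg.continuous)
      ((pd_cont (pd_contDiff hg 1) 1).fun_mul hg.continuous)]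
    exact Icongr fun x => by rw [lap_eq]; ring
  rw [h1, ibp (pd_contDiff hg 0) hg (pd_per hg hgp 0) hgp 0,
    ibp (pd_contDiff hg 1) hg (pd_per hg hgp 1) hgp 1]
  rw [← neg_add, ← Iadd ((pd_cont hg 0).fun_mul (pd_cont hg 0)) ((pd_cont hg 1).fun_mul (pd_cont hg 1))]
  congr 1
  exact Icongr fun x => by ring

lemma pd_pd_zero (i j : Fin 2) (x : E2) : pd i (pd j (fun _ => (0:ℝ))) x = 0 := by
  have : pd j (fun _ => (0:ℝ)) = fun _ => (0:ℝ) := funext (pd_zero_fun j)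
  rw [this, pd_zero_fun]

lemma div_lap {u0 u1 : E2 → ℝ} (h0 : Sm u0) (h1 : Sm u1)
    (hdiv : ∀ x, pd 0 u0 x + pd 1 u1 x = 0) (x : E2) :
    pd 0 (lap u0) x + pd 1 (lap u1) x = 0 := by
  set s : E2 → ℝ := fun x => pd 0 u0 x + pd 1 u1 x with hs
  have hs0 : s = fun _ => (0:ℝ) := funext hdiv
  -- pd i (pd i s) x = pd i pd i pd0u0 + pd i pd i pd1u1
  have hpds : ∀ i : Fin 2, pd i s = fun y => pd i (pd 0 u0) y + pd i (pd 1 u1) y :=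
    fun i => funext (pd_add (pd_contDiff h0 0) (pd_contDiff h1 1) i)
  have key : ∀ i : Fin 2, pd i (pd i (pd 0 u0)) x + pd i (pd i (pd 1 u1)) x = 0 := by
    intro i
    have h2 : pd i (pd i s) x = pd i (pd i (pd 0 u0)) x + pd i (pd i (pd 1 u1)) x := by
      conv_lhs => rw [hpds i]
      exact pd_add (pd_contDiff (pd_contDiff h0 0) i) (pd_contDiff (pd_contDiff h1 1) i) i x
    rw [← h2, hs0, pd_pd_zero]
  -- rearrange pd 0 (lap u0) + pd 1 (lap u1)
  have e0 : pd 0 (lap u0) x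
      = pd 0 (pd 0 (pd 0 u0)) x + pd 1 (pd 1 (pd 0 u0)) x := by
    have hl : lap u0 = fun y => pd 0 (pd 0 u0) y + pd 1 (pd 1 u0) y := funext (lap_eq u0)
    rw [hl, pd_add (pd_contDiff (pd_contDiff h0 0) 0) (pd_contDiff (pd_contDiff h0 1) 1) 0]
    congr 1
    -- pd 0 (pd 1 (pd 1 u0)) x = pd 1 (pd 1 (pd 0 u0)) x
    rw [pd_comm (pd_contDiff h0 1) 0 1]
    congr 1
    exact funext fun y => pd_comm h0 0 1 y
  have e1 : pd 1 (lap u1) x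
      = pd 0 (pd 0 (pd 1 u1)) x + pd 1 (pd 1 (pd 1 u1)) x := by
    have hl : lap u1 = fun y => pd 0 (pd 0 u1) y + pd 1 (pd 1 u1) y := funext (lap_eq u1)
    rw [hl, pd_add (pd_contDiff (pd_contDiff h1 0) 0) (pd_contDiff (pd_contDiff h1 1) 1) 1]
    have : pd 1 (pd 0 (pd 0 u1)) x = pd 0 (pd 0 (pd 1 u1)) x := by
      rw [pd_comm (pd_contDiff h1 0) 1 0]
      congr 1
      exact funext fun y => pd_comm h1 1 0 y
    rw [this]
  rw [e0, e1]
  have := key 0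
  have := key 1
  linarith

section NL
variable {u0 u1 : E2 → ℝ} (h0 : Sm u0) (h1 : Sm u1) (p0 : Per2 u0) (p1 : Per2 u1)
  (hdiv : ∀ x, pd 0 u0 x + pd 1 u1 x = 0)

include h0 h1 p0 p1 hdiv in
lemma nonlinear_zero :
    ∫ x in Q2, (lap u0 x * (u0 x * pd 0 u0 x + u1 x * pd 1 u0 x)
      + lap u1 x * (u0 x * pd 0 u1 x + u1 x * pd 1 u1 x)) = 0 := by
  set V0 : E2 → ℝ := fun x => u0 x * pd 0 u0 x + u1 x * pd 1 u0 x with hV0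
  set V1 : E2 → ℝ := fun x => u0 x * pd 0 u1 x + u1 x * pd 1 u1 x with hV1
  have hsV0 : Sm V0 := (h0.mul (pd_contDiff h0 0)).add (h1.mul (pd_contDiff h0 1))
  have hsV1 : Sm V1 := (h0.mul (pd_contDiff h1 0)).add (h1.mul (pd_contDiff h1 1))
  have hpV0 : Per2 V0 := fun x i => by
    simp only [hV0, p0 x i, p1 x i, pd_per h0 p0 0 x i, pd_per h0 p0 1 x i]
  have hpV1 : Per2 V1 := fun x i => by
    simp only [hV1, p0 x i, p1 x i, pd_per h1 p1 0 x i, pd_per h1 p1 1 x i]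
  set W : E2 → ℝ := fun x => pd 0 u0 x ^ 2 + pd 1 u0 x ^ 2 + pd 0 u1 x ^ 2 + pd 1 u1 x ^ 2
    with hW
  have hsW : Sm W :=
    ((((pd_contDiff h0 0).pow 2).add
       ((pd_contDiff h0 1).pow 2)).add
       ((pd_contDiff h1 0).pow 2)).add
       ((pd_contDiff h1 1).pow 2)
  have hpW : Per2 W := fun x i => by
    simp only [hW, pd_per h0 p0 0 x i, pd_per h0 p0 1 x i,
      pd_per h1 p1 0 x i, pd_per h1 p1 1 x i]
  have pdV : ∀ (g : E2 → ℝ), Sm g → ∀ (k : Fin 2) (x : E2),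
      pd k (fun y => u0 y * pd 0 g y + u1 y * pd 1 g y) x
      = pd k u0 x * pd 0 g x + u0 x * pd k (pd 0 g) x
        + pd k u1 x * pd 1 g x + u1 x * pd k (pd 1 g) x := by
    intro g hg k x
    rw [pd_add (h0.mul (pd_contDiff hg 0)) (h1.mul (pd_contDiff hg 1)) k,
      pd_mul h0 (pd_contDiff hg 0) k, pd_mul h1 (pd_contDiff hg 1) k]
    ring
  have pdW : ∀ (k : Fin 2) (x : E2), pd k W x
      = 2 * pd 0 u0 x * pd k (pd 0 u0) x + 2 * pd 1 u0 x * pd k (pd 1 u0) x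
        + 2 * pd 0 u1 x * pd k (pd 0 u1) x + 2 * pd 1 u1 x * pd k (pd 1 u1) x := by
    intro k x
    simp only [hW]
    rw [pd_add ((((pd_contDiff h0 0).pow 2).add ((pd_contDiff h0 1).pow 2)).add
        ((pd_contDiff h1 0).pow 2)) ((pd_contDiff h1 1).pow 2) k,
      pd_add (((pd_contDiff h0 0).pow 2).add ((pd_contDiff h0 1).pow 2))
        ((pd_contDiff h1 0).pow 2) k,
      pd_add ((pd_contDiff h0 0).pow 2) ((pd_contDiff h0 1).pow 2) k,
      pd_sq (pd_contDiff h0 0) k, pd_sq (pd_contDiff h0 1) k,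
      pd_sq (pd_contDiff h1 0) k, pd_sq (pd_contDiff h1 1) k]
  have hpt : ∀ x : E2, pd 0 u0 x * pd 0 V0 x + pd 1 u0 x * pd 1 V0 x
      + pd 0 u1 x * pd 0 V1 x + pd 1 u1 x * pd 1 V1 x
      = (1/2) * (u0 x * pd 0 W x + u1 x * pd 1 W x) := by
    intro x
    simp only [hV0, hV1]
    rw [pdV u0 h0 0 x, pdV u0 h0 1 x, pdV u1 h1 0 x, pdV u1 h1 1 x, pdW 0 x, pdW 1 x]
    have c1 : ∀ y, pd 1 (pd 0 u0) y = pd 0 (pd 1 u0) y := fun y => pd_comm h0 1 0 y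
    have c2 : ∀ y, pd 1 (pd 0 u1) y = pd 0 (pd 1 u1) y := fun y => pd_comm h1 1 0 y
    simp only [c1, c2]
    have hd : pd 1 u1 x = - pd 0 u0 x := by linarith [hdiv x]
    rw [hd]
    ring
  -- continuity facts
  have cl0 : Continuous (lap u0) := (lap_contDiff h0).continuous
  have cl1 : Continuous (lap u1) := (lap_contDiff h1).continuous
  have cV0 : Continuous V0 := hsV0.continuous
  have cV1 : Continuous V1 := hsV1.continuous
  have c000 : Continuous (pd 0 (pd 0 u0)) := pd_cont (pd_contDiff h0 0) 0
  have c110 : Continuous (pd 1 (pd 1 u0)) := pd_cont (pd_contDiff h0 1) 1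
  have c001 : Continuous (pd 0 (pd 0 u1)) := pd_cont (pd_contDiff h1 0) 0
  have c111 : Continuous (pd 1 (pd 1 u1)) := pd_cont (pd_contDiff h1 1) 1
  -- split the integral into four pieces
  have hsplit : ∫ x in Q2, (lap u0 x * V0 x + lap u1 x * V1 x)
      = (((∫ x in Q2, pd 0 (pd 0 u0) x * V0 x) + ∫ x in Q2, pd 1 (pd 1 u0) x * V0 x)
        + ∫ x in Q2, pd 0 (pd 0 u1) x * V1 x) + ∫ x in Q2, pd 1 (pd 1 u1) x * V1 x := by
    rw [← Iadd (c000.fun_mul cV0) (c110.fun_mul cV0),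
      ← Iadd ((c000.fun_mul cV0).fun_add (c110.fun_mul cV0)) (c001.fun_mul cV1),
      ← Iadd (((c000.fun_mul cV0).fun_add (c110.fun_mul cV0)).fun_add (c001.fun_mul cV1)) (c111.fun_mul cV1)]
    exact Icongr fun x => by rw [lap_eq, lap_eq]; ring
  have i1 := ibp (pd_contDiff h0 0) hsV0 (pd_per h0 p0 0) hpV0 0
  have i2 := ibp (pd_contDiff h0 1) hsV0 (pd_per h0 p0 1) hpV0 1
  have i3 := ibp (pd_contDiff h1 0) hsV1 (pd_per h1 p1 0) hpV1 0
  have i4 := ibp (pd_contDiff h1 1) hsV1 (pd_per h1 p1 1) hpV1 1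
  rw [hsplit, i1, i2, i3, i4]
  have cp00 : Continuous fun x => pd 0 u0 x * pd 0 V0 x := (pd_cont h0 0).mul (pd_cont hsV0 0)
  have cp10 : Continuous fun x => pd 1 u0 x * pd 1 V0 x := (pd_cont h0 1).mul (pd_cont hsV0 1)
  have cp01 : Continuous fun x => pd 0 u1 x * pd 0 V1 x := (pd_cont h1 0).mul (pd_cont hsV1 0)
  have cp11 : Continuous fun x => pd 1 u1 x * pd 1 V1 x := (pd_cont h1 1).mul (pd_cont hsV1 1)
  have hrecomb : (((-∫ x in Q2, pd 0 u0 x * pd 0 V0 x) + -∫ x in Q2, pd 1 u0 x * pd 1 V0 x)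
        + -∫ x in Q2, pd 0 u1 x * pd 0 V1 x) + -∫ x in Q2, pd 1 u1 x * pd 1 V1 x
      = - ∫ x in Q2, (pd 0 u0 x * pd 0 V0 x + pd 1 u0 x * pd 1 V0 x
          + pd 0 u1 x * pd 0 V1 x + pd 1 u1 x * pd 1 V1 x) := by
    rw [show (fun x => pd 0 u0 x * pd 0 V0 x + pd 1 u0 x * pd 1 V0 x
          + pd 0 u1 x * pd 0 V1 x + pd 1 u1 x * pd 1 V1 x)
        = fun x => ((pd 0 u0 x * pd 0 V0 x + pd 1 u0 x * pd 1 V0 x)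
          + pd 0 u1 x * pd 0 V1 x) + pd 1 u1 x * pd 1 V1 x from rfl,
      Iadd ((cp00.fun_add cp10).fun_add cp01) cp11, Iadd (cp00.fun_add cp10) cp01, Iadd cp00 cp10]
    ring
  rw [hrecomb, Icongr hpt]
  have : ∫ x in Q2, (1/2) * (u0 x * pd 0 W x + u1 x * pd 1 W x)
      = (1/2) * ∫ x in Q2, (u0 x * pd 0 W x + u1 x * pd 1 W x) := integral_const_mul _ _
  rw [this, transport h0 h1 hsW p0 p1 hpW hdiv]
  ring
end NL

/-- If `u` is a smooth `2π`-periodic steady solution of the forced Navier–Stokes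
equations `−νΔu + (u·∇)u + ∇p = f` with `div u = 0`, `div f = 0`, and Kolmogorov
forcing `−Δf = λf`, then `∫_Q |Δu|² dx = λ ∫_Q |∇u|² dx`. -/
theorem stmt4 (ν lam : ℝ) (hν : 0 < ν) (hlam : 0 < lam)
    (u f : E2 → Fin 2 → ℝ) (p : E2 → ℝ)
    (hu : ContDiff ℝ (⊤ : ℕ∞) u) (hf : ContDiff ℝ (⊤ : ℕ∞) f) (hp : ContDiff ℝ (⊤ : ℕ∞) p)
    (huper : Per2 u) (hfper : Per2 f) (hpper : Per2 p)
    (hudiv : ∀ x, ∑ j : Fin 2, pd j (fun y => u y j) x = 0)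
    (hfdiv : ∀ x, ∑ j : Fin 2, pd j (fun y => f y j) x = 0)
    (hfeig : ∀ x, ∀ i : Fin 2, -(lap (fun y => f y i) x) = lam * f x i)
    (heq : ∀ x, ∀ i : Fin 2,
      -ν * lap (fun y => u y i) x + (∑ j : Fin 2, u x j * pd j (fun y => u y i) x)
        + pd i p x = f x i) :
    ∫ x in Q2, ∑ i : Fin 2, (lap (fun y => u y i) x)^2
      = lam * ∫ x in Q2, ∑ i : Fin 2, ∑ j : Fin 2, (pd j (fun y => u y i) x)^2 := by
  -- component facts
  have hsu0 : Sm (fun y => u y 0) := contDiff_pi.mp hu 0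
  have hsu1 : Sm (fun y => u y 1) := contDiff_pi.mp hu 1
  have hsf0 : Sm (fun y => f y 0) := contDiff_pi.mp hf 0
  have hsf1 : Sm (fun y => f y 1) := contDiff_pi.mp hf 1
  have hpu0 : Per2 (fun y => u y 0) := fun x i => congrFun (huper x i) 0
  have hpu1 : Per2 (fun y => u y 1) := fun x i => congrFun (huper x i) 1
  have hpf0 : Per2 (fun y => f y 0) := fun x i => congrFun (hfper x i) 0
  have hpf1 : Per2 (fun y => f y 1) := fun x i => congrFun (hfper x i) 1
  have hdiv : ∀ x, pd 0 (fun y => u y 0) x + pd 1 (fun y => u y 1) x = 0 := by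
    intro x; have h := hudiv x; rwa [Fin.sum_univ_two] at h
  have heqc : ∀ (x : E2) (i : Fin 2), -ν * lap (fun y => u y i) x
      + (u x 0 * pd 0 (fun y => u y i) x + u x 1 * pd 1 (fun y => u y i) x)
      + pd i p x = f x i := by
    intro x i; have h := heq x i; rwa [Fin.sum_univ_two] at h
  -- continuity shorthands
  have cu0 : Continuous (fun y => u y 0) := hsu0.continuous
  have cu1 : Continuous (fun y => u y 1) := hsu1.continuous
  have cf0 : Continuous (fun y => f y 0) := hsf0.continuous
  have cf1 : Continuous (fun y => f y 1) := hsf1.continuous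
  have cl0 : Continuous (lap (fun y => u y 0)) := (lap_contDiff hsu0).continuous
  have cl1 : Continuous (lap (fun y => u y 1)) := (lap_contDiff hsu1).continuous
  -- reduce sums in the goal
  have gl : ∫ x in Q2, ∑ i : Fin 2, (lap (fun y => u y i) x)^2
      = ∫ x in Q2, ((lap (fun y => u y 0) x)^2 + (lap (fun y => u y 1) x)^2) :=
    Icongr fun x => by rw [Fin.sum_univ_two]
  have gr : ∫ x in Q2, ∑ i : Fin 2, ∑ j : Fin 2, (pd j (fun y => u y i) x)^2
      = ∫ x in Q2, ((pd 0 (fun y => u y 0) x ^2 + pd 1 (fun y => u y 0) x ^2)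
        + (pd 0 (fun y => u y 1) x ^2 + pd 1 (fun y => u y 1) x ^2)) :=
    Icongr fun x => by rw [Fin.sum_univ_two, Fin.sum_univ_two, Fin.sum_univ_two]
  rw [gl, gr]
  set A : ℝ := ∫ x in Q2, ((lap (fun y => u y 0) x)^2 + (lap (fun y => u y 1) x)^2) with hA
  set B : ℝ := ∫ x in Q2, ((pd 0 (fun y => u y 0) x ^2 + pd 1 (fun y => u y 0) x ^2)
        + (pd 0 (fun y => u y 1) x ^2 + pd 1 (fun y => u y 1) x ^2)) with hB
  set C : ℝ := ∫ x in Q2, (u x 0 * f x 0 + u x 1 * f x 1) with hC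
  -- Claim: eigen pairing, D = -lam * C
  have e0 : ∫ x in Q2, lap (fun y => u y 0) x * f x 0
      = -lam * ∫ x in Q2, u x 0 * f x 0 := by
    rw [lap_pair hsu0 hsf0 hpu0 hpf0,
      Icongr (fun x => show u x 0 * lap (fun y => f y 0) x = -lam * (u x 0 * f x 0) by
        linear_combination (-(u x 0)) * hfeig x 0)]
    exact integral_const_mul _ _
  have e1 : ∫ x in Q2, lap (fun y => u y 1) x * f x 1
      = -lam * ∫ x in Q2, u x 1 * f x 1 := by
    rw [lap_pair hsu1 hsf1 hpu1 hpf1,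
      Icongr (fun x => show u x 1 * lap (fun y => f y 1) x = -lam * (u x 1 * f x 1) by
        linear_combination (-(u x 1)) * hfeig x 1)]
    exact integral_const_mul _ _
  have hD : ∫ x in Q2, (lap (fun y => u y 0) x * f x 0 + lap (fun y => u y 1) x * f x 1)
      = -lam * C := by
    rw [Iadd (cl0.fun_mul cf0) (cl1.fun_mul cf1), e0, e1, hC,
      Iadd (cu0.fun_mul cf0) (cu1.fun_mul cf1)]
    ring
  -- Claim: pressure term vanishes against lap u
  have hP : ∫ x in Q2, (lap (fun y => u y 0) x * pd 0 p x
      + lap (fun y => u y 1) x * pd 1 p x) = 0 :=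
    transport (lap_contDiff hsu0) (lap_contDiff hsu1) hp
      (lap_per hsu0 hpu0) (lap_per hsu1 hpu1) hpper (div_lap hsu0 hsu1 hdiv)
  -- Claim: nonlinear term vanishes against lap u
  have hN := nonlinear_zero hsu0 hsu1 hpu0 hpu1 hdiv
  -- Claim: pressure term vanishes against u
  have hPu : ∫ x in Q2, (u x 0 * pd 0 p x + u x 1 * pd 1 p x) = 0 :=
    transport hsu0 hsu1 hp hpu0 hpu1 hpper hdiv
  -- Claim: nonlinear term vanishes against u
  have hNu : ∫ x in Q2, (u x 0 * (u x 0 * pd 0 (fun y => u y 0) x + u x 1 * pd 1 (fun y => u y 0) x)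
      + u x 1 * (u x 0 * pd 0 (fun y => u y 1) x + u x 1 * pd 1 (fun y => u y 1) x)) = 0 := by
    have hsW : Sm (fun x => (fun y => u y 0) x ^ 2 + (fun y => u y 1) x ^ 2) :=
      (hsu0.pow 2).add (hsu1.pow 2)
    have hpW : Per2 (fun x : E2 => (fun y => u y 0) x ^ 2 + (fun y => u y 1) x ^ 2) :=
      fun x i => by simp only [hpu0 x i, hpu1 x i]
    have ht := transport hsu0 hsu1 hsW hpu0 hpu1 hpW hdiv
    have hpt : ∀ x : E2, u x 0 * (u x 0 * pd 0 (fun y => u y 0) x + u x 1 * pd 1 (fun y => u y 0) x)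
        + u x 1 * (u x 0 * pd 0 (fun y => u y 1) x + u x 1 * pd 1 (fun y => u y 1) x)
        = (1/2) * (u x 0 * pd 0 (fun x => (fun y => u y 0) x ^ 2 + (fun y => u y 1) x ^ 2) x
          + u x 1 * pd 1 (fun x => (fun y => u y 0) x ^ 2 + (fun y => u y 1) x ^ 2) x) := by
      intro x
      rw [pd_add (hsu0.pow 2) (hsu1.pow 2) 0, pd_add (hsu0.pow 2) (hsu1.pow 2) 1,
        pd_sq hsu0 0, pd_sq hsu0 1, pd_sq hsu1 0, pd_sq hsu1 1]
      ring
    rw [Icongr hpt, integral_const_mul _ _, ht]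
    ring
  -- energy balance: C = ν * B
  have hCB : C = ν * B := by
    have hsub : ∀ x : E2, u x 0 * f x 0 + u x 1 * f x 1
        = -ν * (u x 0 * lap (fun y => u y 0) x + u x 1 * lap (fun y => u y 1) x)
          + (u x 0 * (u x 0 * pd 0 (fun y => u y 0) x + u x 1 * pd 1 (fun y => u y 0) x)
            + u x 1 * (u x 0 * pd 0 (fun y => u y 1) x + u x 1 * pd 1 (fun y => u y 1) x))
          + (u x 0 * pd 0 p x + u x 1 * pd 1 p x) := by
      intro x
      have h0 := heqc x 0
      have h1 := heqc x 1
      linear_combination (u x 0) * h0.symm + (u x 1) * h1.symm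
    have cP : Continuous fun x => u x 0 * pd 0 p x + u x 1 * pd 1 p x :=
      (cu0.mul (pd_cont hp 0)).add (cu1.mul (pd_cont hp 1))
    have cNL : Continuous fun x =>
        u x 0 * (u x 0 * pd 0 (fun y => u y 0) x + u x 1 * pd 1 (fun y => u y 0) x)
        + u x 1 * (u x 0 * pd 0 (fun y => u y 1) x + u x 1 * pd 1 (fun y => u y 1) x) :=
      (cu0.mul ((cu0.mul (pd_cont hsu0 0)).add (cu1.mul (pd_cont hsu0 1)))).add
        (cu1.mul ((cu0.mul (pd_cont hsu1 0)).add (cu1.mul (pd_cont hsu1 1))))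
    have cL : Continuous fun x =>
        -ν * (u x 0 * lap (fun y => u y 0) x + u x 1 * lap (fun y => u y 1) x) :=
      continuous_const.mul ((cu0.mul cl0).add (cu1.mul cl1))
    have cB0 : Continuous fun x => pd 0 (fun y => u y 0) x ^2 + pd 1 (fun y => u y 0) x ^2 :=
      ((pd_cont hsu0 0).pow 2).add ((pd_cont hsu0 1).pow 2)
    have cB1 : Continuous fun x => pd 0 (fun y => u y 1) x ^2 + pd 1 (fun y => u y 1) x ^2 :=
      ((pd_cont hsu1 0).pow 2).add ((pd_cont hsu1 1).pow 2)
    rw [hC, Icongr hsub, Iadd (cL.fun_add cNL) cP, Iadd cL cNL, hNu, hPu,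
      integral_const_mul _ _, Iadd (cu0.fun_mul cl0) (cu1.fun_mul cl1),
      lap_energy hsu0 hpu0, lap_energy hsu1 hpu1, hB, Iadd cB0 cB1]
    ring
  -- final assembly
  have hsub2 : ∀ x : E2, lap (fun y => u y 0) x * f x 0 + lap (fun y => u y 1) x * f x 1
      = -ν * ((lap (fun y => u y 0) x)^2 + (lap (fun y => u y 1) x)^2)
        + (lap (fun y => u y 0) x * (u x 0 * pd 0 (fun y => u y 0) x + u x 1 * pd 1 (fun y => u y 0) x)
          + lap (fun y => u y 1) x * (u x 0 * pd 0 (fun y => u y 1) x + u x 1 * pd 1 (fun y => u y 1) x))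
        + (lap (fun y => u y 0) x * pd 0 p x + lap (fun y => u y 1) x * pd 1 p x) := by
    intro x
    have h0 := heqc x 0
    have h1 := heqc x 1
    linear_combination (lap (fun y => u y 0) x) * h0.symm + (lap (fun y => u y 1) x) * h1.symm
  have cNL2 : Continuous fun x =>
      lap (fun y => u y 0) x * (u x 0 * pd 0 (fun y => u y 0) x + u x 1 * pd 1 (fun y => u y 0) x)
      + lap (fun y => u y 1) x * (u x 0 * pd 0 (fun y => u y 1) x + u x 1 * pd 1 (fun y => u y 1) x) :=
    (cl0.mul ((cu0.mul (pd_cont hsu0 0)).add (cu1.mul (pd_cont hsu0 1)))).add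
      (cl1.mul ((cu0.mul (pd_cont hsu1 0)).add (cu1.mul (pd_cont hsu1 1))))
  have cA : Continuous fun x =>
      -ν * ((lap (fun y => u y 0) x)^2 + (lap (fun y => u y 1) x)^2) :=
    continuous_const.mul ((cl0.pow 2).add (cl1.pow 2))
  have cP2 : Continuous fun x =>
      lap (fun y => u y 0) x * pd 0 p x + lap (fun y => u y 1) x * pd 1 p x :=
    (cl0.mul (pd_cont hp 0)).add (cl1.mul (pd_cont hp 1))
  have hfin : -ν * A = -lam * C := by
    rw [← hD, Icongr hsub2, Iadd (cA.fun_add cNL2) cP2, Iadd cA cNL2, hN, hP,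
      integral_const_mul _ _, ← hA]
    ring
  rw [hCB] at hfin
  have : ν * A = ν * (lam * B) := by linarith
  exact mul_left_cancel₀ (ne_of_gt hν) this
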